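/- Consider an imprecise Markov chain with initial model E_1 and lower transition operator T; assume T is Perron–Frobenius-like with stationary lower expectation E_∞, let r be the smallest natural number with ρ := ρ(T^r) < 1, and for f : 𝒳 → ℝ define the average-gain process A^f by A^f(□) := 0 and A^f(x_{1:n}) := (1/n)[(f(x_1) − E_1(f)) + ∑_{k=2}^{n} (f(x_k) − Tf(x_{k−1}))]. Then for every f : 𝒳 → ℝ: (i) |A^{T^ℓ f}(x_{1:n})| ≤ ‖f‖_v · ρ^{⌊ℓ/r⌋} for all ℓ ∈ ℕ ∪ {0}, all n ∈ ℕ and all x_{1:n} ∈ 𝒳^n; (ii) for every path ω ∈ Ω, lim_{n→∞} (1/n) ∑_{k=1}^{n} (T^n f)(ω_k) = E_∞(f); (iii) for every path ω ∈ Ω, lim_{n→∞} (1/n) ∑_{ℓ=1}^{n} (T^ℓ f)(ω_n) = E_∞(f); (iv) lim_{n→∞} (1/n) ∑_{k=1}^{n} E_1(T^{k−1} f) = E_∞(f). -/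

import Mathlib

open Filter Topology

namespace IP

/-- A situation of length `n`: a tuple of the first `n` states. -/
abbrev Sit (𝒳 : ℕ → Type) (n : ℕ) := (i : Fin n) → 𝒳 i

/-- A path: an infinite sequence of states. -/
abbrev Path (𝒳 : ℕ → Type) := (i : ℕ) → 𝒳 i

/-- The initial segment `ω^n` of a path. -/
def res {𝒳 : ℕ → Type} (ω : Path 𝒳) (n : ℕ) : Sit 𝒳 n := fun i => ω i

/-- The initial (empty) situation `□`. -/
def emptySit {𝒳 : ℕ → Type} : Sit 𝒳 0 := fun i => i.elim0

/-- Append a next state to a situation. -/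
def snoc {𝒳 : ℕ → Type} {n : ℕ} (s : Sit 𝒳 n) (x : 𝒳 n) : Sit 𝒳 (n + 1) := fun i =>
  if h : (i : ℕ) < n then s ⟨i, h⟩
  else cast (congrArg 𝒳 (Nat.le_antisymm (Nat.le_of_not_lt h) (Nat.lt_succ_iff.mp i.isLt))) x

/-- Truncate a situation of length `n` to its first `k` states. -/
def trunc {𝒳 : ℕ → Type} {n : ℕ} (s : Sit 𝒳 n) (k : ℕ) (h : k ≤ n) : Sit 𝒳 k :=
  fun i => s ⟨i, lt_of_lt_of_le i.isLt h⟩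

/-- A (coherent) lower expectation on a nonempty finite set. -/
def IsLE {Y : Type} [Fintype Y] [Nonempty Y] (E : (Y → ℝ) → ℝ) : Prop :=
  (∀ f : Y → ℝ, (⨅ y, f y) ≤ E f) ∧
  (∀ f g : Y → ℝ, E f + E g ≤ E (fun y => f y + g y)) ∧
  (∀ (f : Y → ℝ) (c : ℝ), 0 ≤ c → E (fun y => c * f y) = c * E f)

/-- Submartingale w.r.t. the local models `Q` of an imprecise probability tree. -/
def IsSubmartingale {𝒳 : ℕ → Type} (Q : ∀ n, Sit 𝒳 n → (𝒳 n → ℝ) → ℝ)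
    (F : ∀ n, Sit 𝒳 n → ℝ) : Prop :=
  ∀ (n : ℕ) (s : Sit 𝒳 n), 0 ≤ Q n s (fun x => F (n + 1) (snoc s x) - F n s)

/-- Supermartingale: `-F` is a submartingale. -/
def IsSupermartingale {𝒳 : ℕ → Type} (Q : ∀ n, Sit 𝒳 n → (𝒳 n → ℝ) → ℝ)
    (F : ∀ n, Sit 𝒳 n → ℝ) : Prop :=
  IsSubmartingale Q (fun n s => -F n s)

/-- A test supermartingale: nonnegative, starting at 1. -/
def IsTestSupermartingale {𝒳 : ℕ → Type} (Q : ∀ n, Sit 𝒳 n → (𝒳 n → ℝ) → ℝ)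
    (F : ∀ n, Sit 𝒳 n → ℝ) : Prop :=
  IsSupermartingale Q F ∧ (∀ n s, 0 ≤ F n s) ∧ F 0 emptySit = 1

/-- An event is strictly null if some test supermartingale converges to `+∞` on it. -/
def StrictlyNull {𝒳 : ℕ → Type} (Q : ∀ n, Sit 𝒳 n → (𝒳 n → ℝ) → ℝ)
    (A : Set (Path 𝒳)) : Prop :=
  ∃ F : ∀ n, Sit 𝒳 n → ℝ, IsTestSupermartingale Q F ∧
    ∀ ω ∈ A, Tendsto (fun n => F n (res ω n)) atTop atTop

/-- `limsup_n F(ω^n)` as an extended real. -/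
noncomputable def pathLimsup {𝒳 : ℕ → Type} (F : ∀ n, Sit 𝒳 n → ℝ) (ω : Path 𝒳) : EReal :=
  Filter.limsup (fun n => (F n (res ω n) : EReal)) atTop

/-- `liminf_n F(ω^n)` as an extended real. -/
noncomputable def pathLiminf {𝒳 : ℕ → Type} (F : ∀ n, Sit 𝒳 n → ℝ) (ω : Path 𝒳) : EReal :=
  Filter.liminf (fun n => (F n (res ω n) : EReal)) atTop

/-- A real process bounded above. -/
def BddAbv {𝒳 : ℕ → Type} (F : ∀ n, Sit 𝒳 n → ℝ) : Prop := ∃ B : ℝ, ∀ n s, F n s ≤ B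

/-- A real process bounded below. -/
def BddBlw {𝒳 : ℕ → Type} (F : ∀ n, Sit 𝒳 n → ℝ) : Prop := ∃ B : ℝ, ∀ n s, B ≤ F n s

/-- Conditional global lower expectation `E(f|s)` of an extended real variable. -/
noncomputable def lexp {𝒳 : ℕ → Type} (Q : ∀ n, Sit 𝒳 n → (𝒳 n → ℝ) → ℝ) {n : ℕ}
    (s : Sit 𝒳 n) (f : Path 𝒳 → EReal) : EReal :=
  sSup ((fun F : ∀ k, Sit 𝒳 k → ℝ => (F n s : EReal)) ''
    {F : ∀ k, Sit 𝒳 k → ℝ | IsSubmartingale Q F ∧ BddAbv F ∧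
      ∀ ω : Path 𝒳, res ω n = s → pathLimsup F ω ≤ f ω})

/-- Conditional global upper expectation `Ē(f|s)`. -/
noncomputable def uexp {𝒳 : ℕ → Type} (Q : ∀ n, Sit 𝒳 n → (𝒳 n → ℝ) → ℝ) {n : ℕ}
    (s : Sit 𝒳 n) (f : Path 𝒳 → EReal) : EReal :=
  - lexp Q s (fun ω => - f ω)

/-- The local models of a (time-homogeneous) imprecise Markov chain with initial model `E1`
and transition models `QT`. -/
def markovQ {X : Type} (E1 : (X → ℝ) → ℝ) (QT : X → (X → ℝ) → ℝ) :
    ∀ n, Sit (fun _ => X) n → (X → ℝ) → ℝ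
  | 0, _ => E1
  | n + 1, s => QT (s ⟨n, Nat.lt_succ_self n⟩)

/-- Prefix a path with a situation (fixed state space). -/
def prependX {X : Type} {n : ℕ} (s : Sit (fun _ => X) n) (ω : ℕ → X) : ℕ → X :=
  fun i => if h : i < n then s ⟨i, h⟩ else ω (i - n)

/-- Extension of a lower transition operator to extended real maps. -/
noncomputable def Text {X : Type} (T : (X → ℝ) → X → ℝ) (g : X → EReal) : X → EReal :=
  fun x => sSup ((fun h : X → ℝ => (T h x : EReal)) '' {h : X → ℝ | ∀ y, (h y : EReal) ≤ g y})

/-- The variation (semi)norm `max h - min h`. -/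
noncomputable def varnorm {X : Type} [Fintype X] [Nonempty X] (h : X → ℝ) : ℝ :=
  (⨆ x, h x) - ⨅ x, h x

/-- The (weak) coefficient of ergodicity of a lower transition operator. -/
noncomputable def coeff {X : Type} [Fintype X] [Nonempty X] (S : (X → ℝ) → X → ℝ) : ℝ :=
  sSup {v : ℝ | ∃ h : X → ℝ, (∀ x, 0 ≤ h x ∧ h x ≤ 1) ∧ v = varnorm (S h)}

/-- Extend a situation to a path, arbitrarily. -/
noncomputable def extend {𝒳 : ℕ → Type} [∀ k, Nonempty (𝒳 k)] {n : ℕ} (t : Sit 𝒳 n) :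
    Path 𝒳 :=
  fun i => if h : i < n then t ⟨i, h⟩ else Classical.arbitrary (𝒳 i)


section Aux
set_option linter.unusedSectionVars false
variable {X : Type} [Fintype X] [Nonempty X]

lemma inf_le'' (f : X → ℝ) (x : X) : ⨅ y, f y ≤ f x :=
  ciInf_le (Finite.bddBelow_range f) x

lemma le_sup'' (f : X → ℝ) (x : X) : f x ≤ ⨆ y, f y :=
  le_ciSup (Finite.bddAbove_range f) x

lemma IsLE.le_sup {E : (X → ℝ) → ℝ} (hE : IsLE E) (f : X → ℝ) : E f ≤ ⨆ y, f y := by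
  have h0 : E (fun _ => (0:ℝ)) = 0 := by
    have := hE.2.2 (fun _ => 0) 0 le_rfl
    simpa using this
  have h1 := hE.2.1 f (fun y => -f y)
  simp only [add_neg_cancel, h0] at h1
  have h2 : (⨅ y, -f y) ≤ E (fun y => -f y) := hE.1 _
  have h3 : -(⨆ y, f y) ≤ ⨅ y, -f y :=
    le_ciInf fun y => neg_le_neg (le_sup'' f y)
  linarith

lemma IsLE.const {E : (X → ℝ) → ℝ} (hE : IsLE E) (c : ℝ) : E (fun _ => c) = c := by
  have h1 := hE.1 (fun _ => c)
  have h2 := hE.le_sup (fun _ => c)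
  simp only [ciInf_const, ciSup_const] at h1 h2
  linarith

lemma IsLE.mono {E : (X → ℝ) → ℝ} (hE : IsLE E) {f g : X → ℝ} (h : ∀ y, f y ≤ g y) :
    E f ≤ E g := by
  have h1 := hE.2.1 f (fun y => g y - f y)
  have h2 : (⨅ y, (g y - f y)) ≤ E (fun y => g y - f y) := hE.1 _
  have h3 : (0:ℝ) ≤ ⨅ y, (g y - f y) := le_ciInf fun y => sub_nonneg.2 (h y)
  have h4 : E (fun y => f y + (g y - f y)) = E g := by
    congr 1; funext y; ring
  linarith [h4 ▸ h1]

lemma IsLE.add_const {E : (X → ℝ) → ℝ} (hE : IsLE E) (f : X → ℝ) (c : ℝ) :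
    E (fun y => f y + c) = E f + c := by
  have hc := hE.const c
  have hc' := hE.const (-c)
  have h1 := hE.2.1 f (fun _ => c)
  rw [hc] at h1
  have h2 := hE.2.1 (fun y => f y + c) (fun _ => -c)
  rw [hc'] at h2
  have h3 : E (fun y => (f y + c) + -c) = E f := by congr 1; funext y; ring
  rw [h3] at h2
  linarith

lemma iterLE {T : (X → ℝ) → X → ℝ} (hT : ∀ x, IsLE (fun h => T h x)) :
    ∀ (k : ℕ) (x : X), IsLE (fun h => T^[k] h x) := by
  intro k
  induction k with
  | zero => exact fun x => ⟨fun f => inf_le'' f x, fun f g => le_of_eq rfl,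
      fun f c _ => rfl⟩
  | succ k ih =>
    intro x
    have key : ∀ h : X → ℝ, T^[k+1] h x = T^[k] (T h) x := fun h => by
      rw [Function.iterate_succ_apply]
    refine ⟨?_, ?_, ?_⟩
    · intro f
      show (⨅ y, f y) ≤ T^[k+1] f x
      rw [key]
      refine le_trans ?_ ((ih x).1 (T f))
      exact le_ciInf fun y => (hT y).1 f
    · intro f g
      show T^[k+1] f x + T^[k+1] g x ≤ T^[k+1] (fun y => f y + g y) x
      rw [key f, key g, key]
      refine le_trans ((ih x).2.1 (T f) (T g)) ?_
      exact (ih x).mono fun y => (hT y).2.1 f g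
    · intro f c hc
      show T^[k+1] (fun y => c * f y) x = c * T^[k+1] f x
      rw [key, key]
      have h2 : T (fun y => c * f y) = fun y => c * T f y := funext fun y => (hT y).2.2 f c hc
      rw [h2]
      exact (ih x).2.2 (T f) c hc

lemma iter_bounds {T : (X → ℝ) → X → ℝ} (hT : ∀ x, IsLE (fun h => T h x))
    (k : ℕ) (h : X → ℝ) (x : X) :
    (⨅ y, h y) ≤ T^[k] h x ∧ T^[k] h x ≤ ⨆ y, h y :=
  ⟨(iterLE hT k x).1 h, (iterLE hT k x).le_sup h⟩

lemma varnorm_nonneg (h : X → ℝ) : 0 ≤ varnorm h := by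
  have x := Classical.arbitrary X
  have := le_trans (inf_le'' h x) (le_sup'' h x)
  simpa [varnorm] using this

lemma varnorm_iter_le {T : (X → ℝ) → X → ℝ} (hT : ∀ x, IsLE (fun h => T h x))
    (k : ℕ) (h : X → ℝ) : varnorm (T^[k] h) ≤ varnorm h := by
  have h1 : (⨆ x, T^[k] h x) ≤ ⨆ y, h y := ciSup_le fun x => (iter_bounds hT k h x).2
  have h2 : (⨅ y, h y) ≤ ⨅ x, T^[k] h x := le_ciInf fun x => (iter_bounds hT k h x).1
  simp only [varnorm]
  linarith

lemma coeff_bdd {S : (X → ℝ) → X → ℝ} (hS : ∀ x, IsLE (fun h => S h x)) :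
    ∀ v ∈ {v : ℝ | ∃ h : X → ℝ, (∀ x, 0 ≤ h x ∧ h x ≤ 1) ∧ v = varnorm (S h)}, v ≤ 1 := by
  rintro v ⟨h, hh, rfl⟩
  have h1 : (⨆ x, S h x) ≤ 1 := ciSup_le fun x =>
    le_trans ((hS x).le_sup h) (ciSup_le fun y => (hh y).2)
  have h2 : (0:ℝ) ≤ ⨅ x, S h x := le_ciInf fun x =>
    le_trans (le_ciInf fun y => (hh y).1) ((hS x).1 h)
  simp only [varnorm]; linarith

lemma coeff_nonneg {S : (X → ℝ) → X → ℝ} (hS : ∀ x, IsLE (fun h => S h x)) :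
    0 ≤ coeff S := by
  have hz : S (fun _ => 0) = fun _ => (0:ℝ) := funext fun x => (hS x).const 0
  have hmem : (0:ℝ) ∈ {v : ℝ | ∃ h : X → ℝ, (∀ x, 0 ≤ h x ∧ h x ≤ 1) ∧ v = varnorm (S h)} :=
    ⟨fun _ => 0, fun x => ⟨le_rfl, zero_le_one⟩, by simp [hz, varnorm]⟩
  exact le_csSup ⟨1, fun v hv => coeff_bdd hS v hv⟩ hmem

lemma iSup_affine (u : X → ℝ) (v m : ℝ) (hv : 0 ≤ v) :
    (⨆ x, (v * u x + m)) = v * (⨆ x, u x) + m := by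
  obtain ⟨x0, hx0⟩ := Finite.exists_max u
  have h1 : (⨆ x, u x) = u x0 := le_antisymm (ciSup_le hx0) (le_sup'' u x0)
  have h2 : (⨆ x, (v * u x + m)) = v * u x0 + m :=
    le_antisymm (ciSup_le fun x => by nlinarith [hx0 x])
      (le_sup'' (fun x => v * u x + m) x0)
  rw [h1, h2]

lemma iInf_affine (u : X → ℝ) (v m : ℝ) (hv : 0 ≤ v) :
    (⨅ x, (v * u x + m)) = v * (⨅ x, u x) + m := by
  obtain ⟨x0, hx0⟩ := Finite.exists_min u
  have h1 : (⨅ x, u x) = u x0 := le_antisymm (inf_le'' u x0) (le_ciInf hx0)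
  have h2 : (⨅ x, (v * u x + m)) = v * u x0 + m :=
    le_antisymm (inf_le'' (fun x => v * u x + m) x0)
      (le_ciInf fun x => by nlinarith [hx0 x])
  rw [h1, h2]

lemma varnorm_le_coeff_mul {S : (X → ℝ) → X → ℝ} (hS : ∀ x, IsLE (fun h => S h x))
    (h : X → ℝ) : varnorm (S h) ≤ coeff S * varnorm h := by
  set m := ⨅ y, h y with hm
  rcases eq_or_lt_of_le (varnorm_nonneg h) with hv | hv
  · -- constant case
    have hc : ∀ x, h x = m := fun x => le_antisymm
      (by have := le_sup'' h x; simp only [varnorm] at hv; linarith)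
      (inf_le'' h x)
    have : h = fun _ => m := funext hc
    rw [this]
    have hz : S (fun _ => m) = fun _ => m := funext fun x => (hS x).const m
    rw [hz]
    simp [varnorm]
  · set v := varnorm h with hvdef
    set g : X → ℝ := fun y => (h y - m) / v with hg
    have hgb : ∀ y, 0 ≤ g y ∧ g y ≤ 1 := by
      intro y
      constructor
      · exact div_nonneg (sub_nonneg.2 (inf_le'' h y)) hv.le
      · rw [div_le_one hv]
        have := le_sup'' h y
        simp only [hvdef, varnorm]; linarith
    have hrepr : h = fun y => v * g y + m := by
      funext y; show h y = v * ((h y - m) / v) + m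
      rw [mul_div_assoc', mul_comm v, mul_div_assoc, div_self hv.ne', mul_one]; ring
    have hSh : S h = fun x => v * S g x + m := by
      rw [hrepr]
      funext x
      have h1 : S (fun y => v * g y + m) x = S (fun y => v * g y) x + m :=
        (hS x).add_const (fun y => v * g y) m
      have h2 : S (fun y => v * g y) x = v * S g x := (hS x).2.2 g v hv.le
      rw [h1, h2]
    rw [hSh]
    have : varnorm (fun x => v * S g x + m) = v * varnorm (S g) := by
      simp only [varnorm, iSup_affine (S g) v m hv.le, iInf_affine (S g) v m hv.le]
      ring
    rw [this]
    have hle : varnorm (S g) ≤ coeff S :=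
      le_csSup ⟨1, fun w hw => coeff_bdd hS w hw⟩ ⟨g, hgb, rfl⟩
    calc v * varnorm (S g) ≤ v * coeff S := by nlinarith
    _ = coeff S * v := mul_comm _ _

lemma varnorm_iterate_pow {S : (X → ℝ) → X → ℝ} (hS : ∀ x, IsLE (fun h => S h x)) :
    ∀ (q : ℕ) (h : X → ℝ), varnorm (S^[q] h) ≤ coeff S ^ q * varnorm h := by
  intro q
  induction q with
  | zero => intro h; simp
  | succ q ih =>
    intro h
    rw [Function.iterate_succ_apply]
    calc varnorm (S^[q] (S h)) ≤ coeff S ^ q * varnorm (S h) := ih (S h)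
    _ ≤ coeff S ^ q * (coeff S * varnorm h) := by
        have := varnorm_le_coeff_mul hS h
        nlinarith [pow_nonneg (coeff_nonneg hS) q]
    _ = coeff S ^ (q+1) * varnorm h := by ring


end Aux

/-- Advanced bounding lemma: average gains are bounded, and three Cesàro-type limits
converge to the stationary lower expectation. -/
theorem advanced_bounding {X : Type} [Fintype X] [Nonempty X]
    (E1 : (X → ℝ) → ℝ) (T : (X → ℝ) → X → ℝ)
    (hE1 : IsLE E1) (hT : ∀ x : X, IsLE (fun h => T h x))
    (Einf : (X → ℝ) → ℝ)
    (hPF : ∀ (h : X → ℝ) (x : X), Tendsto (fun n => (T^[n] h) x) atTop (nhds (Einf h)))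
    (r : ℕ) (hr0 : 0 < r) (hρ : coeff (T^[r]) < 1)
    (hrmin : ∀ r' : ℕ, 0 < r' → coeff (T^[r']) < 1 → r ≤ r')
    (f : X → ℝ) :
    (∀ (l n : ℕ) (s : Fin n → X),
        |(n : ℝ)⁻¹ * ∑ k : Fin n, (T^[l] f (s k) -
            (if k.1 = 0 then E1 (T^[l] f)
              else T (T^[l] f) (s ⟨k.1 - 1, lt_of_le_of_lt (Nat.sub_le k.1 1) k.isLt⟩)))|
          ≤ varnorm f * coeff (T^[r]) ^ (l / r))
    ∧ (∀ ω : ℕ → X, Tendsto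
        (fun n : ℕ => (n : ℝ)⁻¹ * ∑ k ∈ Finset.range n, T^[n] f (ω k))
        atTop (nhds (Einf f)))
    ∧ (∀ ω : ℕ → X, Tendsto
        (fun n : ℕ => (n : ℝ)⁻¹ * ∑ l ∈ Finset.Icc 1 n, T^[l] f (ω (n - 1)))
        atTop (nhds (Einf f)))
    ∧ Tendsto (fun n : ℕ => (n : ℝ)⁻¹ * ∑ k ∈ Finset.range n, E1 (T^[k] f))
        atTop (nhds (Einf f)) := by
  have hSle : ∀ x, IsLE (fun h => T^[r] h x) := fun x => iterLE hT r x
  have hρ0 : (0:ℝ) ≤ coeff (T^[r]) := coeff_nonneg hSle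
  -- uniform deviation d
  set d : ℕ → ℝ := fun l => ⨆ x, |T^[l] f x - Einf f| with hddef
  have hdle : ∀ (l : ℕ) (x : X), |T^[l] f x - Einf f| ≤ d l := fun l x =>
    le_sup'' (fun x => |T^[l] f x - Einf f|) x
  have hd0 : ∀ l, 0 ≤ d l := fun l =>
    le_trans (abs_nonneg _) (hdle l (Classical.arbitrary X))
  have hdt : Tendsto d atTop (nhds 0) := by
    rw [Metric.tendsto_atTop]
    intro ε hε
    have hx : ∀ x : X, ∀ᶠ l in atTop, |T^[l] f x - Einf f| < ε/2 := by
      intro x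
      have h1 : Tendsto (fun l => |T^[l] f x - Einf f|) atTop (nhds 0) := by
        have h2 := (hPF f x).sub_const (Einf f)
        simp only [sub_self] at h2
        simpa using h2.abs
      exact h1.eventually (gt_mem_nhds (by linarith))
    obtain ⟨N, hN⟩ := eventually_atTop.1 (eventually_all.2 hx)
    refine ⟨N, fun l hl => ?_⟩
    rw [Real.dist_eq, sub_zero, abs_of_nonneg (hd0 l)]
    have : d l ≤ ε/2 := ciSup_le fun x => (hN l hl x).le
    linarith
  refine ⟨?_, ?_, ?_, ?_⟩
  · -- part (i)
    intro l n s
    have hvar : varnorm (T^[l] f) ≤ varnorm f * coeff (T^[r]) ^ (l / r) := by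
      have hl : r * (l / r) + l % r = l := Nat.div_add_mod l r
      have heq : T^[l] f = (T^[r])^[l / r] (T^[l % r] f) := by
        conv_lhs => rw [← hl]
        rw [Function.iterate_add_apply, Function.iterate_mul]
      rw [heq]
      calc varnorm ((T^[r])^[l/r] (T^[l%r] f))
          ≤ coeff (T^[r]) ^ (l/r) * varnorm (T^[l%r] f) :=
            varnorm_iterate_pow hSle (l/r) _
        _ ≤ coeff (T^[r]) ^ (l/r) * varnorm f := by
            have := varnorm_iter_le hT (l % r) f
            nlinarith [pow_nonneg hρ0 (l/r)]
        _ = varnorm f * coeff (T^[r]) ^ (l/r) := mul_comm _ _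
    rcases Nat.eq_zero_or_pos n with hn | hn
    · subst hn
      simp only [Finset.univ_eq_empty, Finset.sum_empty, mul_zero, abs_zero]
      exact mul_nonneg (varnorm_nonneg f) (pow_nonneg hρ0 _)
    · set g := T^[l] f with hg
      have hb : ∀ k : Fin n, |g (s k) -
          (if k.1 = 0 then E1 g
            else T g (s ⟨k.1 - 1, lt_of_le_of_lt (Nat.sub_le k.1 1) k.isLt⟩))| ≤ varnorm g := by
        intro k
        have hg1 : ⨅ y, g y ≤ g (s k) := inf_le'' g _
        have hg2 : g (s k) ≤ ⨆ y, g y := le_sup'' g _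
        have hbm : (⨅ y, g y) ≤ (if k.1 = 0 then E1 g
              else T g (s ⟨k.1 - 1, lt_of_le_of_lt (Nat.sub_le k.1 1) k.isLt⟩)) ∧
            (if k.1 = 0 then E1 g
              else T g (s ⟨k.1 - 1, lt_of_le_of_lt (Nat.sub_le k.1 1) k.isLt⟩)) ≤ ⨆ y, g y := by
          split
          · exact ⟨hE1.1 g, hE1.le_sup g⟩
          · exact ⟨(hT _).1 g, (hT _).le_sup g⟩
        rw [abs_le]
        constructor
        · simp only [varnorm]; linarith [hbm.1, hbm.2]
        · simp only [varnorm]; linarith [hbm.1, hbm.2]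
      have hne : (n:ℝ) ≠ 0 := Nat.cast_ne_zero.2 hn.ne'
      calc |(n : ℝ)⁻¹ * ∑ k : Fin n, (g (s k) -
            (if k.1 = 0 then E1 g
              else T g (s ⟨k.1 - 1, lt_of_le_of_lt (Nat.sub_le k.1 1) k.isLt⟩)))|
          = (n:ℝ)⁻¹ * |∑ k : Fin n, (g (s k) -
            (if k.1 = 0 then E1 g
              else T g (s ⟨k.1 - 1, lt_of_le_of_lt (Nat.sub_le k.1 1) k.isLt⟩)))| := by
            rw [abs_mul, abs_of_nonneg (by positivity)]
        _ ≤ (n:ℝ)⁻¹ * ∑ k : Fin n, |g (s k) -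
            (if k.1 = 0 then E1 g
              else T g (s ⟨k.1 - 1, lt_of_le_of_lt (Nat.sub_le k.1 1) k.isLt⟩))| := by
            gcongr
            exact Finset.abs_sum_le_sum_abs _ _
        _ ≤ (n:ℝ)⁻¹ * ((n:ℝ) * varnorm g) := by
            gcongr
            calc (∑ k : Fin n, |g (s k) -
                (if k.1 = 0 then E1 g
                  else T g (s ⟨k.1 - 1, lt_of_le_of_lt (Nat.sub_le k.1 1) k.isLt⟩))|)
                ≤ ∑ _k : Fin n, varnorm g := Finset.sum_le_sum fun k _ => hb k
              _ = (n:ℝ) * varnorm g := by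
                  simp [Finset.sum_const, Finset.card_univ, nsmul_eq_mul]
        _ = varnorm g := by rw [← mul_assoc, inv_mul_cancel₀ hne, one_mul]
        _ ≤ varnorm f * coeff (T^[r]) ^ (l / r) := hvar
  · -- part (ii)
    intro ω
    rw [← tendsto_sub_nhds_zero_iff]
    apply squeeze_zero_norm' _ hdt
    filter_upwards [eventually_ge_atTop 1] with n hn
    have hne : (n:ℝ) ≠ 0 := Nat.cast_ne_zero.2 (by omega)
    have hsum : (n:ℝ)⁻¹ * (∑ k ∈ Finset.range n, T^[n] f (ω k)) - Einf f
        = (n:ℝ)⁻¹ * ∑ k ∈ Finset.range n, (T^[n] f (ω k) - Einf f) := by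
      rw [Finset.sum_sub_distrib, Finset.sum_const, Finset.card_range, nsmul_eq_mul,
        mul_sub, ← mul_assoc, inv_mul_cancel₀ hne, one_mul]
    rw [Real.norm_eq_abs, hsum, abs_mul, abs_of_nonneg (by positivity : (0:ℝ) ≤ (n:ℝ)⁻¹)]
    calc (n:ℝ)⁻¹ * |∑ k ∈ Finset.range n, (T^[n] f (ω k) - Einf f)|
        ≤ (n:ℝ)⁻¹ * ∑ k ∈ Finset.range n, |T^[n] f (ω k) - Einf f| := by
          gcongr; exact Finset.abs_sum_le_sum_abs _ _
      _ ≤ (n:ℝ)⁻¹ * ((n:ℝ) * d n) := by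
          gcongr
          calc (∑ k ∈ Finset.range n, |T^[n] f (ω k) - Einf f|)
              ≤ ∑ _k ∈ Finset.range n, d n := Finset.sum_le_sum fun k _ => hdle n (ω k)
            _ = (n:ℝ) * d n := by simp [nsmul_eq_mul]
      _ = d n := by rw [← mul_assoc, inv_mul_cancel₀ hne, one_mul]
  · -- part (iii)
    intro ω
    have hd1 : Tendsto (fun i : ℕ => d (i+1)) atTop (nhds 0) :=
      hdt.comp (tendsto_add_atTop_nat 1)
    have he : Tendsto (fun n : ℕ => (n:ℝ)⁻¹ * ∑ i ∈ Finset.range n, d (i+1))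
        atTop (nhds 0) := hd1.cesaro
    rw [← tendsto_sub_nhds_zero_iff]
    apply squeeze_zero_norm' _ he
    filter_upwards [eventually_ge_atTop 1] with n hn
    have hne : (n:ℝ) ≠ 0 := Nat.cast_ne_zero.2 (by omega)
    have hcard : (Finset.Icc 1 n).card = n := by rw [Nat.card_Icc]; omega
    have hsum : (n:ℝ)⁻¹ * (∑ l ∈ Finset.Icc 1 n, T^[l] f (ω (n-1))) - Einf f
        = (n:ℝ)⁻¹ * ∑ l ∈ Finset.Icc 1 n, (T^[l] f (ω (n-1)) - Einf f) := by
      rw [Finset.sum_sub_distrib, Finset.sum_const, hcard, nsmul_eq_mul,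
        mul_sub, ← mul_assoc, inv_mul_cancel₀ hne, one_mul]
    have hIcc : (∑ l ∈ Finset.Icc 1 n, d l) = ∑ i ∈ Finset.range n, d (i+1) := by
      rw [← Finset.Ico_add_one_right_eq_Icc, Finset.sum_Ico_eq_sum_range]
      have hnn : n + 1 - 1 = n := by omega
      rw [hnn]
      exact Finset.sum_congr rfl fun i _ => by rw [Nat.add_comm]
    rw [Real.norm_eq_abs, hsum, abs_mul, abs_of_nonneg (by positivity : (0:ℝ) ≤ (n:ℝ)⁻¹)]
    calc (n:ℝ)⁻¹ * |∑ l ∈ Finset.Icc 1 n, (T^[l] f (ω (n-1)) - Einf f)|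
        ≤ (n:ℝ)⁻¹ * ∑ l ∈ Finset.Icc 1 n, |T^[l] f (ω (n-1)) - Einf f| := by
          gcongr; exact Finset.abs_sum_le_sum_abs _ _
      _ ≤ (n:ℝ)⁻¹ * ∑ l ∈ Finset.Icc 1 n, d l := by
          gcongr with l hl
          exact hdle l (ω (n-1))
      _ = (n:ℝ)⁻¹ * ∑ i ∈ Finset.range n, d (i+1) := by rw [hIcc]
  · -- part (iv)
    have ha : Tendsto (fun k => E1 (T^[k] f)) atTop (nhds (Einf f)) := by
      rw [← tendsto_sub_nhds_zero_iff]
      apply squeeze_zero_norm _ hdt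
      intro k
      rw [Real.norm_eq_abs]
      have h1 := hE1.1 (T^[k] f)
      have h2 := hE1.le_sup (T^[k] f)
      have h3 : (⨆ x, T^[k] f x) ≤ Einf f + d k := ciSup_le fun x => by
        have := (abs_le.1 (hdle k x)).2; linarith
      have h4 : Einf f - d k ≤ ⨅ x, T^[k] f x := le_ciInf fun x => by
        have := (abs_le.1 (hdle k x)).1; linarith
      rw [abs_le]
      constructor <;> linarith
    exact ha.cesaro



end IP
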